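/- For every n ∈ ℕ, the modified Schreier family S^M_n equals the Schreier family S_n; in particular S^M_n is closed under taking subsets (hereditary), and every element of S^M_n is an element of S_n and vice versa. -/
import Mathlib


/-- The first Schreier family: finite sets `F` with `|F| ≤ min F`. -/
def SchreierOne : Set (Finset ℕ) := {F | ∀ k ∈ F, F.card ≤ k}

/-- The minimum of a finite set of naturals (0 for the empty set). -/
noncomputable def finMin (F : Finset ℕ) : ℕ := sInf {k | k ∈ F}

/-- The convolution `P[Q]` of two families of finite subsets of ℕ:
unions of successive members of `Q` whose minima form a set in `P`. -/
def conv (P Q : Set (Finset ℕ)) : Set (Finset ℕ) :=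
  {U | ∃ (d : ℕ) (F : Fin d → Finset ℕ),
    (∀ i, F i ∈ Q) ∧ (∀ i, (F i).Nonempty) ∧
    (∀ i j : Fin d, i < j → ∀ a ∈ F i, ∀ b ∈ F j, a < b) ∧
    (Finset.univ.image fun i => finMin (F i)) ∈ P ∧
    U = Finset.univ.biUnion F}

/-- The modified convolution `P[Q]_M`: unions of pairwise disjoint members of `Q`
whose minima form a set in `P`. -/
def mconv (P Q : Set (Finset ℕ)) : Set (Finset ℕ) :=
  {U | ∃ (d : ℕ) (F : Fin d → Finset ℕ),
    (∀ i, F i ∈ Q) ∧ (∀ i, (F i).Nonempty) ∧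
    (∀ i j : Fin d, i ≠ j → Disjoint (F i) (F j)) ∧
    (Finset.univ.image fun i => finMin (F i)) ∈ P ∧
    U = Finset.univ.biUnion F}

/-- The Schreier families `S_n` (indexed so that `Schreier 1 = S_1`,
`Schreier (n+1) = S_1[S_n]`). -/
def Schreier : ℕ → Set (Finset ℕ)
  | 0 => {F | F.card ≤ 1}
  | 1 => SchreierOne
  | (n+2) => conv SchreierOne (Schreier (n+1))

/-- The modified Schreier families `S^M_n`. -/
def SchreierM : ℕ → Set (Finset ℕ)
  | 0 => {F | F.card ≤ 1}
  | 1 => SchreierOne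
  | (n+2) => mconv SchreierOne (SchreierM (n+1))

/- ## helpers -/

lemma finMin_mem {F : Finset ℕ} (h : F.Nonempty) : finMin F ∈ F := by
  have : {k | k ∈ F}.Nonempty := ⟨h.choose, h.choose_spec⟩
  exact Nat.sInf_mem this

lemma finMin_le {F : Finset ℕ} {x : ℕ} (h : x ∈ F) : finMin F ≤ x :=
  Nat.sInf_le h

lemma finMin_eq {F : Finset ℕ} {a : ℕ} (ha : a ∈ F) (h : ∀ x ∈ F, a ≤ x) :
    finMin F = a :=
  le_antisymm (finMin_le ha) (h _ (finMin_mem ⟨a, ha⟩))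

lemma empty_mem_schreier : ∀ n, (∅ : Finset ℕ) ∈ Schreier n := by
  intro n
  match n with
  | 0 => simp [Schreier]
  | 1 => intro k hk; simp at hk
  | (n+2) =>
    refine ⟨0, fun i => ∅, ?_, ?_, ?_, ?_, ?_⟩ <;>
      first
        | (intro i; exact absurd i.2 (by omega))
        | (intro i j h; exact absurd i.2 (by omega))
        | simp
    · intro k hk; simp at hk

lemma s1_image {F : Finset ℕ} {φ : ℕ → ℕ} (hF : F ∈ SchreierOne)
    (hinj : Set.InjOn φ ↑F) (hexp : ∀ x ∈ F, x ≤ φ x) :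
    F.image φ ∈ SchreierOne := by
  intro k hk
  rw [Finset.mem_image] at hk
  obtain ⟨x, hx, rfl⟩ := hk
  calc (F.image φ).card = F.card := Finset.card_image_of_injOn hinj
    _ ≤ x := hF x hx
    _ ≤ φ x := hexp x hx

lemma finMin_image_strictMonoOn {F : Finset ℕ} {φ : ℕ → ℕ} (hne : F.Nonempty)
    (hmono : StrictMonoOn φ ↑F) : finMin (F.image φ) = φ (finMin F) := by
  refine finMin_eq (Finset.mem_image_of_mem φ (finMin_mem hne)) ?_
  intro x hx
  rw [Finset.mem_image] at hx
  obtain ⟨y, hy, rfl⟩ := hx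
  exact hmono.monotoneOn (finMin_mem hne) hy (finMin_le hy)

/-- Spreading property of the Schreier families. -/
lemma schreier_spreading : ∀ n, 1 ≤ n → ∀ (F : Finset ℕ) (φ : ℕ → ℕ),
    F ∈ Schreier n → StrictMonoOn φ ↑F → (∀ x ∈ F, x ≤ φ x) →
    F.image φ ∈ Schreier n := by
  intro n
  induction n with
  | zero => omega
  | succ n IH =>
    intro _ F φ hF hmono hexp
    match n with
    | 0 => exact s1_image hF hmono.injOn hexp
    | (n+1) =>
      obtain ⟨d, B, hBQ, hBne, hord, hmin, rfl⟩ := hF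
      have hsub : ∀ i, ↑(B i) ⊆ (↑(Finset.univ.biUnion B) : Set ℕ) := by
        intro i x hx
        simp only [Finset.coe_biUnion, Finset.coe_univ, Set.mem_iUnion]
        exact ⟨i, trivial, hx⟩
      refine ⟨d, fun i => (B i).image φ, ?_, ?_, ?_, ?_, ?_⟩
      · intro i
        exact IH (by omega) _ _ (hBQ i) (hmono.mono (hsub i)) (fun x hx => hexp x ((hsub i) hx))
      · intro i; exact (hBne i).image φ
      · intro i j hij a ha b hb
        rw [Finset.mem_image] at ha hb
        obtain ⟨x, hx, rfl⟩ := ha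
        obtain ⟨y, hy, rfl⟩ := hb
        exact hmono ((hsub i) hx) ((hsub j) hy) (hord i j hij x hx y hy)
      · -- minima set
        have hmins : ∀ i, finMin ((B i).image φ) = φ (finMin (B i)) := fun i =>
          finMin_image_strictMonoOn (hBne i) (hmono.mono (hsub i))
        have himg : (Finset.univ.image fun i => finMin ((B i).image φ))
            = (Finset.univ.image fun i => finMin (B i)).image φ := by
          rw [Finset.image_image]
          exact Finset.image_congr (fun i _ => hmins i)
        rw [himg]
        have hsubm : ↑(Finset.univ.image fun i => finMin (B i))
            ⊆ (↑(Finset.univ.biUnion B) : Set ℕ) := by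
          intro x hx
          simp only [Finset.coe_image, Set.mem_image, Finset.mem_coe, Finset.coe_univ,
            Set.image_univ, Set.mem_range] at hx
          obtain ⟨i, rfl⟩ := hx
          exact hsub i (finMin_mem (hBne i))
        exact s1_image hmin ((hmono.mono hsubm).injOn)
          (fun x hx => hexp x (hsubm hx))
      · rw [Finset.biUnion_image]  -- maybe wrong name

lemma mins_strictMono {d : ℕ} {B : Fin d → Finset ℕ}
    (hne : ∀ i, (B i).Nonempty)
    (hord : ∀ i j : Fin d, i < j → ∀ a ∈ B i, ∀ b ∈ B j, a < b) :
    StrictMono (fun i => finMin (B i)) := by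
  intro i j hij
  exact hord i j hij _ (finMin_mem (hne i)) _ (finMin_mem (hne j))

lemma mins_card_le {d : ℕ} {B : Fin d → Finset ℕ}
    (hne : ∀ i, (B i).Nonempty)
    (hord : ∀ i j : Fin d, i < j → ∀ a ∈ B i, ∀ b ∈ B j, a < b)
    (hmin : (Finset.univ.image fun i => finMin (B i)) ∈ SchreierOne) :
    ∀ i, d ≤ finMin (B i) := by
  intro i
  have hcard : (Finset.univ.image fun i => finMin (B i)).card = d := by
    rw [Finset.card_image_of_injective _ (mins_strictMono hne hord).injective,
      Finset.card_univ, Fintype.card_fin]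
  have := hmin (finMin (B i)) (Finset.mem_image_of_mem _ (Finset.mem_univ i))
  omega

lemma schreier_hereditary : ∀ n, ∀ F ∈ Schreier n, ∀ G ⊆ F, G ∈ Schreier n := by
  intro n
  induction n with
  | zero =>
    intro F hF G hG
    simp only [Schreier, Set.mem_setOf_eq] at *
    exact le_trans (Finset.card_le_card hG) hF
  | succ n IH =>
    match n with
    | 0 =>
      intro F hF G hG k hk
      exact le_trans (Finset.card_le_card hG) (hF k (hG hk))
    | (n+1) =>
      rintro F ⟨d, B, hBQ, hBne, hord, hmin, rfl⟩ G hG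
      classical
      set sel : Finset (Fin d) := Finset.univ.filter (fun i => (G ∩ B i).Nonempty) with hsel
      set ι : Fin sel.card → Fin d := fun t => ((sel.orderIsoOfFin rfl) t : Fin d) with hι
      have hιmem : ∀ t, ι t ∈ sel := fun t => ((sel.orderIsoOfFin rfl) t).2
      have hιmono : StrictMono ι := fun a b h => (sel.orderIsoOfFin rfl).strictMono h
      have hιne : ∀ t, (G ∩ B (ι t)).Nonempty := by
        intro t
        have := hιmem t
        rw [hsel, Finset.mem_filter] at this
        exact this.2
      refine ⟨sel.card, fun t => G ∩ B (ι t), ?_, hιne, ?_, ?_, ?_⟩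
      · intro t
        exact IH (B (ι t)) (hBQ (ι t)) _ Finset.inter_subset_right
      · intro i j hij a ha b hb
        exact hord (ι i) (ι j) (hιmono hij) a (Finset.mem_of_mem_inter_right ha)
          b (Finset.mem_of_mem_inter_right hb)
      · intro k hk
        rw [Finset.mem_image] at hk
        obtain ⟨t, _, rfl⟩ := hk
        show (Finset.univ.image fun t => finMin (G ∩ B (ι t))).card ≤ finMin (G ∩ B (ι t))
        have h1 : finMin (G ∩ B (ι t)) ∈ B (ι t) :=
          Finset.mem_of_mem_inter_right (finMin_mem (hιne t))
        have h2 : d ≤ finMin (B (ι t)) := mins_card_le hBne hord hmin (ι t)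
        have h3 : finMin (B (ι t)) ≤ finMin (G ∩ B (ι t)) := finMin_le h1
        have h4 : (Finset.univ.image fun t => finMin (G ∩ B (ι t))).card ≤ sel.card := by
          calc (Finset.univ.image fun t => finMin (G ∩ B (ι t))).card
              ≤ (Finset.univ : Finset (Fin sel.card)).card := Finset.card_image_le
            _ = sel.card := by rw [Finset.card_univ, Fintype.card_fin]
        have h5 : sel.card ≤ d := by
          calc sel.card ≤ (Finset.univ : Finset (Fin d)).card := Finset.card_le_card (by simp [hsel])
            _ = d := by rw [Finset.card_univ, Fintype.card_fin]
        omega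
      · ext x
        simp only [Finset.mem_biUnion, Finset.mem_univ, true_and]
        constructor
        · intro hx
          have hxF := hG hx
          rw [Finset.mem_biUnion] at hxF
          obtain ⟨i, _, hxi⟩ := hxF
          have hisel : i ∈ sel := by
            rw [hsel, Finset.mem_filter]
            exact ⟨Finset.mem_univ i, ⟨x, Finset.mem_inter.2 ⟨hx, hxi⟩⟩⟩
          refine ⟨(sel.orderIsoOfFin rfl).symm ⟨i, hisel⟩, ?_⟩
          rw [Finset.mem_inter]
          refine ⟨hx, ?_⟩
          have : ι ((sel.orderIsoOfFin rfl).symm ⟨i, hisel⟩) = i := by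
            rw [hι]; simp
          rw [this]; exact hxi
        · rintro ⟨t, ht⟩
          exact Finset.mem_of_mem_inter_left ht

lemma conv_swap : ∀ m, 1 ≤ m → ∀ U ∈ conv (Schreier m) SchreierOne, U ∈ Schreier (m+1) := by
  intro m
  induction m with
  | zero => omega
  | succ m IH =>
    intro _ U hU
    match m with
    | 0 => exact hU
    | (m+1) =>
      obtain ⟨d, B, hB1, hBne, hord, hM, rfl⟩ := hU
      obtain ⟨r, C, hCQ, hCne, hCord, hCmin, hMeq⟩ := hM
      classical
      set sel : Fin r → Finset (Fin d) :=
        fun s => Finset.univ.filter (fun j => finMin (B j) ∈ C s) with hsel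
      set H : Fin r → Finset ℕ := fun s => (sel s).biUnion B with hH
      have hselmem : ∀ {s j}, j ∈ sel s ↔ finMin (B j) ∈ C s := by
        intro s j; rw [hsel, Finset.mem_filter]; simp
      have hCsub : ∀ s, ∀ x ∈ C s, x ∈ Finset.univ.image fun i => finMin (B i) := by
        intro s x hx
        rw [hMeq, Finset.mem_biUnion]
        exact ⟨s, Finset.mem_univ s, hx⟩
      -- each C s element is a min of some block in sel s
      have hCwit : ∀ s, ∀ x ∈ C s, ∃ j ∈ sel s, finMin (B j) = x := by
        intro s x hx
        obtain ⟨j, _, hj⟩ := Finset.mem_image.1 (hCsub s x hx)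
        exact ⟨j, hselmem.2 (hj ▸ hx), hj⟩
      have hHmin : ∀ s, finMin (H s) = finMin (C s) := by
        intro s
        obtain ⟨j0, hj0, hj0m⟩ := hCwit s _ (finMin_mem (hCne s))
        refine finMin_eq ?_ ?_
        · rw [hH]; rw [Finset.mem_biUnion]
          exact ⟨j0, hj0, hj0m ▸ finMin_mem (hBne j0)⟩
        · intro x hx
          rw [hH, Finset.mem_biUnion] at hx
          obtain ⟨j, hj, hxj⟩ := hx
          calc finMin (C s) ≤ finMin (B j) := finMin_le (hselmem.1 hj)
            _ ≤ x := finMin_le hxj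
      have hHne : ∀ s, (H s).Nonempty := by
        intro s
        obtain ⟨j0, hj0, hj0m⟩ := hCwit s _ (finMin_mem (hCne s))
        exact ⟨finMin (B j0), Finset.mem_biUnion.2 ⟨j0, hj0, finMin_mem (hBne j0)⟩⟩
      refine ⟨r, H, ?_, hHne, ?_, ?_, ?_⟩
      · -- each H s ∈ Schreier (m+2)
        intro s
        refine IH (by omega) (H s) ?_
        refine ⟨(sel s).card, fun t => B (((sel s).orderIsoOfFin rfl t : Fin d)),
          fun t => hB1 _, fun t => hBne _, ?_, ?_, ?_⟩
        · intro i j hij a ha b hb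
          exact hord _ _ (((sel s).orderIsoOfFin rfl).strictMono hij) a ha b hb
        · have : (Finset.univ.image fun t => finMin (B (((sel s).orderIsoOfFin rfl t : Fin d))))
              = C s := by
            apply Finset.Subset.antisymm
            · intro x hx
              obtain ⟨t, _, rfl⟩ := Finset.mem_image.1 hx
              exact hselmem.1 ((sel s).orderIsoOfFin rfl t).2
            · intro x hx
              obtain ⟨j, hj, hjm⟩ := hCwit s x hx
              refine Finset.mem_image.2 ⟨((sel s).orderIsoOfFin rfl).symm ⟨j, hj⟩,
                Finset.mem_univ _, ?_⟩
              simp [hjm]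
          rw [this]; exact hCQ s
        · ext x
          rw [hH, Finset.mem_biUnion, Finset.mem_biUnion]
          constructor
          · rintro ⟨j, hj, hx⟩
            exact ⟨((sel s).orderIsoOfFin rfl).symm ⟨j, hj⟩, Finset.mem_univ _, by simpa using hx⟩
          · rintro ⟨t, _, hx⟩
            exact ⟨_, ((sel s).orderIsoOfFin rfl t).2, hx⟩
      · -- ordered
        intro s s' hss a ha b hb
        rw [hH, Finset.mem_biUnion] at ha hb
        obtain ⟨j, hj, haj⟩ := ha
        obtain ⟨j', hj', hbj⟩ := hb
        have hlt : finMin (B j) < finMin (B j') :=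
          hCord s s' hss _ (hselmem.1 hj) _ (hselmem.1 hj')
        have hjj : j < j' := by
          rcases lt_trichotomy j j' with h | h | h
          · exact h
          · exact absurd (h ▸ hlt) (lt_irrefl _)
          · exact absurd hlt (lt_asymm (mins_strictMono hBne hord h))
        exact hord j j' hjj a haj b hbj
      · -- minima
        have : (Finset.univ.image fun s => finMin (H s))
            = Finset.univ.image fun s => finMin (C s) :=
          Finset.image_congr (fun s _ => hHmin s)
        rw [this]; exact hCmin
      · -- union
        apply Finset.Subset.antisymm
        · intro x hx
          rw [Finset.mem_biUnion] at hx
          obtain ⟨j, _, hxj⟩ := hx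
          have : finMin (B j) ∈ Finset.univ.biUnion C := by
            rw [← hMeq]; exact Finset.mem_image_of_mem _ (Finset.mem_univ j)
          rw [Finset.mem_biUnion] at this
          obtain ⟨s, _, hs⟩ := this
          exact Finset.mem_biUnion.2 ⟨s, Finset.mem_univ s,
            Finset.mem_biUnion.2 ⟨j, hselmem.2 hs, hxj⟩⟩
        · intro x hx
          rw [Finset.mem_biUnion] at hx
          obtain ⟨s, _, hxs⟩ := hx
          rw [hH, Finset.mem_biUnion] at hxs
          obtain ⟨j, _, hxj⟩ := hxs
          exact Finset.mem_biUnion.2 ⟨j, Finset.mem_univ j, hxj⟩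

/- ## rank machinery -/

noncomputable def rankIn (U : Finset ℕ) (x : ℕ) : ℕ := (U.filter (· < x)).card

lemma rankIn_mono {U : Finset ℕ} {x y : ℕ} (h : x ≤ y) : rankIn U x ≤ rankIn U y := by
  apply Finset.card_le_card
  intro z hz
  rw [Finset.mem_filter] at *
  exact ⟨hz.1, by omega⟩

lemma rankIn_lt_card {U : Finset ℕ} {x : ℕ} (h : x ∈ U) : rankIn U x < U.card := by
  have hsub : U.filter (· < x) ⊆ U.erase x := by
    intro y hy
    rw [Finset.mem_filter] at hy
    exact Finset.mem_erase.2 ⟨by omega, hy.1⟩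
  have := Finset.card_le_card hsub
  have h2 := Finset.card_erase_lt_of_mem h
  unfold rankIn; omega

lemma rankIn_strictMonoOn {U : Finset ℕ} {x y : ℕ} (hx : x ∈ U) (hlt : x < y) :
    rankIn U x < rankIn U y := by
  apply Finset.card_lt_card
  refine ⟨?_, ?_⟩
  · intro z hz
    rw [Finset.mem_filter] at *
    exact ⟨hz.1, by omega⟩
  intro hcon
  have : x ∈ U.filter (· < y) := Finset.mem_filter.2 ⟨hx, hlt⟩
  have := hcon this
  rw [Finset.mem_filter] at this
  omega

lemma rankIn_injOn {U : Finset ℕ} : Set.InjOn (rankIn U) ↑U := by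
  intro x hx y hy hxy
  by_contra hne
  rcases lt_or_gt_of_ne hne with h | h
  · exact absurd hxy (Nat.ne_of_lt (rankIn_strictMonoOn hx h))
  · exact absurd hxy.symm (Nat.ne_of_lt (rankIn_strictMonoOn hy h))

lemma rankIn_image {U : Finset ℕ} : U.image (rankIn U) = Finset.range U.card := by
  apply Finset.eq_of_subset_of_card_le
  · intro r hr
    obtain ⟨x, hx, rfl⟩ := Finset.mem_image.1 hr
    exact Finset.mem_range.2 (rankIn_lt_card hx)
  · rw [Finset.card_range, Finset.card_image_of_injOn rankIn_injOn]

lemma rankIn_surj {U : Finset ℕ} {r : ℕ} (h : r < U.card) : ∃ x ∈ U, rankIn U x = r := by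
  have : r ∈ U.image (rankIn U) := by rw [rankIn_image]; exact Finset.mem_range.2 h
  obtain ⟨x, hx, hxr⟩ := Finset.mem_image.1 this
  exact ⟨x, hx, hxr⟩

lemma exists_between_partial (c : ℕ → ℕ) (h0 : c 0 = 0) :
    ∀ t r, r < c t → ∃ j, j < t ∧ c j ≤ r ∧ r < c (j+1) := by
  intro t
  induction t with
  | zero => intro r hr; omega
  | succ t IH =>
    intro r hr
    by_cases h : r < c t
    · obtain ⟨j, h1, h2, h3⟩ := IH r h
      exact ⟨j, by omega, h2, h3⟩
    · exact ⟨t, by omega, by omega, hr⟩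

lemma g_one_sorted (m : ℕ) (hm : 1 ≤ m) (N : ℕ) (Q : Fin N → Finset ℕ)
    (hQ1 : ∀ i, Q i ∈ SchreierOne) (hQne : ∀ i, (Q i).Nonempty)
    (hdisj : ∀ i j, i ≠ j → Disjoint (Q i) (Q j))
    (hμ : StrictMono (fun i => finMin (Q i)))
    (hMm : (Finset.univ.image fun i => finMin (Q i)) ∈ Schreier m) :
    Finset.univ.biUnion Q ∈ Schreier (m+1) := by
  classical
  set U : Finset ℕ := Finset.univ.biUnion Q with hU
  set μ : Fin N → ℕ := fun i => finMin (Q i) with hμdef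
  set c : ℕ → ℕ :=
    fun t => ∑ i ∈ Finset.univ.filter (fun i : Fin N => (i : ℕ) < t), (Q i).card with hc
  have hc0 : c 0 = 0 := by
    rw [hc]; simp
  have hcmono : Monotone c := by
    intro a b hab
    apply Finset.sum_le_sum_of_subset
    intro i hi
    rw [Finset.mem_filter] at *
    exact ⟨hi.1, by omega⟩
  have hcN : c N = U.card := by
    have hft : Finset.univ.filter (fun i : Fin N => (i : ℕ) < N) = Finset.univ := by
      apply Finset.filter_true_of_mem; intro i _; exact i.isLt
    rw [hU, Finset.card_biUnion (fun i _ j _ hij => hdisj i j hij)]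
    show (∑ i ∈ Finset.univ.filter (fun i : Fin N => (i : ℕ) < N), (Q i).card) = _
    rw [hft]
  have hcsucc : ∀ j : Fin N, c ((j : ℕ)+1) = c (j : ℕ) + (Q j).card := by
    intro j
    show (∑ i ∈ Finset.univ.filter (fun i : Fin N => (i : ℕ) < (j : ℕ)+1), (Q i).card)
      = (∑ i ∈ Finset.univ.filter (fun i : Fin N => (i : ℕ) < (j : ℕ)), (Q i).card) + (Q j).card
    have hins : Finset.univ.filter (fun i : Fin N => (i : ℕ) < (j : ℕ)+1)
        = insert j (Finset.univ.filter (fun i : Fin N => (i : ℕ) < (j : ℕ))) := by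
      ext i
      simp only [Finset.mem_filter, Finset.mem_univ, true_and, Finset.mem_insert]
      constructor
      · intro h
        rcases Nat.lt_or_ge (i : ℕ) (j : ℕ) with h' | h'
        · exact Or.inr h'
        · exact Or.inl (Fin.ext (by omega))
      · rintro (rfl | h) <;> omega
    rw [hins, Finset.sum_insert (by simp)]
    omega
  set B : Fin N → Finset ℕ :=
    fun j => U.filter (fun x => c (j : ℕ) ≤ rankIn U x ∧ rankIn U x < c ((j : ℕ)+1)) with hB
  have hBelem : ∀ j, ∀ x ∈ B j, μ j ≤ x := by
    intro j x hx
    by_contra hcon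
    push_neg at hcon
    rw [hB, Finset.mem_filter] at hx
    obtain ⟨hxU, hcle, _⟩ := hx
    have hsubT : U.filter (· < μ j)
        ⊆ (Finset.univ.filter (fun i : Fin N => (i : ℕ) < (j : ℕ))).biUnion Q := by
      intro y hy
      rw [Finset.mem_filter] at hy
      obtain ⟨hyU, hylt⟩ := hy
      rw [hU, Finset.mem_biUnion] at hyU
      obtain ⟨i, _, hyi⟩ := hyU
      have hij : i < j := by
        by_contra hji
        push_neg at hji
        have : μ j ≤ μ i := hμ.monotone hji
        have : μ i ≤ y := finMin_le hyi
        omega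
      exact Finset.mem_biUnion.2 ⟨i, Finset.mem_filter.2 ⟨Finset.mem_univ i, hij⟩, hyi⟩
    have hTcard := Finset.card_biUnion_le
      (s := Finset.univ.filter (fun i : Fin N => (i : ℕ) < (j : ℕ))) (t := Q)
    have hfc := Finset.card_le_card hsubT
    have hins : insert x (U.filter (· < x)) ⊆ U.filter (· < μ j) := by
      intro y hy
      rw [Finset.mem_insert] at hy
      rcases hy with rfl | hy
      · exact Finset.mem_filter.2 ⟨hxU, hcon⟩
      · rw [Finset.mem_filter] at hy ⊢
        exact ⟨hy.1, by omega⟩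
    have hinscard := Finset.card_le_card hins
    have hxnot : x ∉ U.filter (· < x) := by
      rw [Finset.mem_filter]; omega
    rw [Finset.card_insert_of_notMem hxnot] at hinscard
    have hr : rankIn U x = (U.filter (· < x)).card := rfl
    have hTc : ((Finset.univ.filter (fun i : Fin N => (i : ℕ) < (j : ℕ))).biUnion Q).card
        ≤ c (j : ℕ) := hTcard
    omega
  have hBimg : ∀ j, (B j).image (rankIn U) = Finset.Ico (c (j : ℕ)) (c ((j : ℕ)+1)) := by
    intro j
    apply Finset.Subset.antisymm
    · intro r hr
      obtain ⟨x, hx, rfl⟩ := Finset.mem_image.1 hr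
      rw [hB, Finset.mem_filter] at hx
      exact Finset.mem_Ico.2 ⟨hx.2.1, hx.2.2⟩
    · intro r hr
      rw [Finset.mem_Ico] at hr
      have hrU : r < U.card := by
        have : (j : ℕ) + 1 ≤ N := j.isLt
        have := hcmono this
        omega
      obtain ⟨x, hxU, hxr⟩ := rankIn_surj hrU
      exact Finset.mem_image.2 ⟨x, Finset.mem_filter.2 ⟨hxU, by omega, by omega⟩, hxr⟩
  have hBcard : ∀ j, (B j).card = (Q j).card := by
    intro j
    have h1 : (B j).card = ((B j).image (rankIn U)).card :=
      (Finset.card_image_of_injOn (rankIn_injOn.mono (by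
        intro x hx
        rw [Finset.mem_coe, hB, Finset.mem_filter] at hx
        exact hx.1))).symm
    rw [h1, hBimg j, Nat.card_Ico, hcsucc j]
    omega
  have hBne : ∀ j, (B j).Nonempty := by
    intro j
    rw [← Finset.card_pos, hBcard j, Finset.card_pos]
    exact hQne j
  have hB1 : ∀ j, B j ∈ SchreierOne := by
    intro j x hx
    calc (B j).card = (Q j).card := hBcard j
      _ ≤ μ j := hQ1 j _ (finMin_mem (hQne j))
      _ ≤ x := hBelem j x hx
  have hBord : ∀ i j : Fin N, i < j → ∀ a ∈ B i, ∀ b ∈ B j, a < b := by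
    intro i j hij a ha b hb
    rw [hB, Finset.mem_filter] at ha hb
    have h1 : ((i : ℕ)+1) ≤ (j : ℕ) := hij
    have h2 := hcmono h1
    by_contra hcon
    push_neg at hcon
    have := rankIn_mono (U := U) hcon
    omega
  have hBU : Finset.univ.biUnion B = U := by
    apply Finset.Subset.antisymm
    · intro x hx
      rw [Finset.mem_biUnion] at hx
      obtain ⟨j, _, hxj⟩ := hx
      rw [hB, Finset.mem_filter] at hxj
      exact hxj.1
    · intro x hx
      have : rankIn U x < c N := by rw [hcN]; exact rankIn_lt_card hx
      obtain ⟨j, hjN, hj1, hj2⟩ := exists_between_partial c hc0 N (rankIn U x) this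
      exact Finset.mem_biUnion.2 ⟨⟨j, hjN⟩, Finset.mem_univ _,
        Finset.mem_filter.2 ⟨hx, hj1, hj2⟩⟩
  -- the minima of the new blocks
  set ν : Fin N → ℕ := fun j => finMin (B j) with hν
  have hνge : ∀ j, μ j ≤ ν j := fun j => hBelem j _ (finMin_mem (hBne j))
  have hνmono : StrictMono ν := mins_strictMono hBne hBord
  set φ : ℕ → ℕ :=
    fun x => if h : ∃ j : Fin N, μ j = x then ν (Classical.choose h) else x with hφ
  have hφμ : ∀ j, φ (μ j) = ν j := by
    intro j
    have h : ∃ j' : Fin N, μ j' = μ j := ⟨j, rfl⟩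
    have hch : Classical.choose h = j := hμ.injective (Classical.choose_spec h)
    rw [hφ]
    simp only [dif_pos h, hch]
  have hspread : (Finset.univ.image ν) ∈ Schreier m := by
    have himg : (Finset.univ.image μ).image φ = Finset.univ.image ν := by
      rw [Finset.image_image]
      exact Finset.image_congr (fun j _ => hφμ j)
    rw [← himg]
    apply schreier_spreading m hm _ φ hMm
    · intro x hx y hy hxy
      rw [Finset.mem_coe, Finset.mem_image] at hx hy
      obtain ⟨i, _, rfl⟩ := hx
      obtain ⟨j, _, rfl⟩ := hy
      rw [hφμ i, hφμ j]
      exact hνmono (hμ.lt_iff_lt.1 hxy)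
    · intro x hx
      rw [Finset.mem_image] at hx
      obtain ⟨j, _, rfl⟩ := hx
      rw [hφμ j]
      exact hνge j
  exact conv_swap m hm U ⟨N, B, hB1, hBne, hBord, hspread, hBU.symm⟩

lemma ordered_pairwise_disjoint {d : ℕ} {B : Fin d → Finset ℕ}
    (hord : ∀ i j : Fin d, i < j → ∀ a ∈ B i, ∀ b ∈ B j, a < b) :
    ∀ i j : Fin d, i ≠ j → Disjoint (B i) (B j) := by
  intro i j hij
  rw [Finset.disjoint_left]
  intro a ha hb
  rcases lt_trichotomy i j with h | h | h
  · exact absurd (hord i j h a ha a hb) (lt_irrefl a)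
  · exact hij h
  · exact absurd (hord j i h a hb a ha) (lt_irrefl a)

lemma g_one : ∀ m, 1 ≤ m → ∀ U ∈ mconv (Schreier m) SchreierOne, U ∈ Schreier (m+1) := by
  intro m hm U hU
  obtain ⟨N, Q, hQ1, hQne, hdisj, hMm, rfl⟩ := hU
  classical
  have hμinj : Function.Injective (fun i => finMin (Q i)) := by
    intro i j hij
    by_contra hne
    have h1 : finMin (Q i) ∈ Q i := finMin_mem (hQne i)
    have h2 : finMin (Q i) ∈ Q j := by
      simp only at hij
      rw [hij]; exact finMin_mem (hQne j)
    exact (Finset.disjoint_left.1 (hdisj i j hne)) h1 h2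
  set π := Tuple.sort (fun i => finMin (Q i)) with hπ
  have hmono : Monotone ((fun i => finMin (Q i)) ∘ π) := Tuple.monotone_sort _
  have hsm : StrictMono (fun j => finMin (Q (π j))) :=
    hmono.strictMono_of_injective (hμinj.comp π.injective)
  have himg : (Finset.univ.image fun j => finMin (Q (π j)))
      = Finset.univ.image fun i => finMin (Q i) := by
    apply Finset.Subset.antisymm
    · intro x hx
      obtain ⟨j, _, rfl⟩ := Finset.mem_image.1 hx
      exact Finset.mem_image_of_mem _ (Finset.mem_univ (π j))
    · intro x hx
      obtain ⟨i, _, rfl⟩ := Finset.mem_image.1 hx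
      refine Finset.mem_image.2 ⟨π.symm i, Finset.mem_univ _, ?_⟩
      rw [Equiv.apply_symm_apply]
  have hbU : Finset.univ.biUnion (fun j => Q (π j)) = Finset.univ.biUnion Q := by
    apply Finset.Subset.antisymm
    · intro x hx
      obtain ⟨j, _, hj⟩ := Finset.mem_biUnion.1 hx
      exact Finset.mem_biUnion.2 ⟨π j, Finset.mem_univ _, hj⟩
    · intro x hx
      obtain ⟨i, _, hi⟩ := Finset.mem_biUnion.1 hx
      refine Finset.mem_biUnion.2 ⟨π.symm i, Finset.mem_univ _, ?_⟩
      rw [Equiv.apply_symm_apply]; exact hi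
  rw [← hbU]
  exact g_one_sorted m hm N (fun j => Q (π j)) (fun j => hQ1 (π j)) (fun j => hQne (π j))
    (fun i j hij => hdisj (π i) (π j) (fun h => hij (π.injective h))) hsm
    (himg ▸ hMm)

lemma g_main : ∀ k, 1 ≤ k → ∀ m, 1 ≤ m →
    ∀ U ∈ mconv (Schreier m) (Schreier k), U ∈ Schreier (k + m) := by
  intro k
  induction k with
  | zero => omega
  | succ k IH =>
    intro _ m hm U hU
    match k with
    | 0 =>
      have h := g_one m hm U hU
      have harith : m + 1 = 0+1+m := by omega
      rw [harith] at h
      exact h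
    | (k+1) =>
      classical
      obtain ⟨D, Qt, hQk, hQne, hdisj, hMm, rfl⟩ := hU
      have hw : ∀ t, ∃ (dt : ℕ) (P : Fin dt → Finset ℕ),
          (∀ s, P s ∈ Schreier (k+1)) ∧ (∀ s, (P s).Nonempty) ∧
          (∀ s s' : Fin dt, s < s' → ∀ a ∈ P s, ∀ b ∈ P s', a < b) ∧
          (Finset.univ.image fun s => finMin (P s)) ∈ SchreierOne ∧
          Qt t = Finset.univ.biUnion P := hQk
      choose d P h1 h2 h3 h4 h5 using hw
      have hPsubQ : ∀ t s, P t s ⊆ Qt t := by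
        intro t s x hx
        rw [h5 t]
        exact Finset.mem_biUnion.2 ⟨s, Finset.mem_univ _, hx⟩
      -- the minima sets
      set Mt : Fin D → Finset ℕ := fun t => Finset.univ.image fun s => finMin (P t s) with hMt
      have hMtsubQ : ∀ t, Mt t ⊆ Qt t := by
        intro t x hx
        obtain ⟨s, _, rfl⟩ := Finset.mem_image.1 hx
        exact hPsubQ t s (finMin_mem (h2 t s))
      have hdpos : ∀ t, 0 < d t := by
        intro t
        rcases Nat.eq_zero_or_pos (d t) with h | h
        · exfalso
          obtain ⟨x, hx⟩ := hQne t
          rw [h5 t, Finset.mem_biUnion] at hx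
          obtain ⟨s, _, _⟩ := hx
          have := s.isLt
          omega
        · exact h
      have hMtne : ∀ t, (Mt t).Nonempty := by
        intro t
        have : (Finset.univ : Finset (Fin (d t))).Nonempty :=
          ⟨⟨0, hdpos t⟩, Finset.mem_univ _⟩
        exact this.image _
      have hMtmin : ∀ t, finMin (Mt t) = finMin (Qt t) := by
        intro t
        have hq : finMin (Qt t) ∈ Qt t := finMin_mem (hQne t)
        have hq2 : finMin (Qt t) ∈ Finset.univ.biUnion (P t) :=
          (Finset.ext_iff.mp (h5 t) _).mp hq
        obtain ⟨s0, _, hs0⟩ := Finset.mem_biUnion.1 hq2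
        have heq : finMin (P t s0) = finMin (Qt t) :=
          le_antisymm (finMin_le hs0) (finMin_le (hPsubQ t s0 (finMin_mem (h2 t s0))))
        refine finMin_eq ?_ ?_
        · show finMin (Qt t) ∈ Finset.univ.image fun s => finMin (P t s)
          exact Finset.mem_image.2 ⟨s0, Finset.mem_univ _, heq⟩
        · intro x hx
          exact finMin_le (hMtsubQ t hx)
      -- minima of all the pieces form a set in Schreier (m+1)
      have hMins : Finset.univ.biUnion Mt ∈ Schreier (m+1) := by
        apply g_one m hm
        refine ⟨D, Mt, fun t => h4 t, hMtne, ?_, ?_, rfl⟩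
        · intro t t' htt
          exact (hdisj t t' htt).mono (hMtsubQ t) (hMtsubQ t')
        · have : (Finset.univ.image fun t => finMin (Mt t))
              = Finset.univ.image fun t => finMin (Qt t) :=
            Finset.image_congr (fun t _ => hMtmin t)
          rw [this]; exact hMm
      -- flatten the pieces
      set I := (Σ t : Fin D, Fin (d t)) with hI
      set e := Fintype.equivFin I with he
      set R : Fin (Fintype.card I) → Finset ℕ := fun i => P (e.symm i).1 (e.symm i).2 with hR
      have hUR : Finset.univ.biUnion Qt = Finset.univ.biUnion R := by
        apply Finset.Subset.antisymm
        · intro x hx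
          obtain ⟨t, _, hxt⟩ := Finset.mem_biUnion.1 hx
          rw [h5 t, Finset.mem_biUnion] at hxt
          obtain ⟨s, _, hxs⟩ := hxt
          refine Finset.mem_biUnion.2 ⟨e ⟨t, s⟩, Finset.mem_univ _, ?_⟩
          show x ∈ P (e.symm (e ⟨t, s⟩)).fst (e.symm (e ⟨t, s⟩)).snd
          rw [e.symm_apply_apply]
          exact hxs
        · intro x hx
          obtain ⟨i, _, hxi⟩ := Finset.mem_biUnion.1 hx
          exact Finset.mem_biUnion.2 ⟨(e.symm i).1, Finset.mem_univ _,
            hPsubQ (e.symm i).1 (e.symm i).2 hxi⟩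
      have hRmins : (Finset.univ.image fun i => finMin (R i)) = Finset.univ.biUnion Mt := by
        apply Finset.Subset.antisymm
        · intro x hx
          obtain ⟨i, _, rfl⟩ := Finset.mem_image.1 hx
          refine Finset.mem_biUnion.2 ⟨(e.symm i).1, Finset.mem_univ _, ?_⟩
          rw [hMt]
          exact Finset.mem_image_of_mem _ (Finset.mem_univ (e.symm i).2)
        · intro x hx
          obtain ⟨t, _, hxt⟩ := Finset.mem_biUnion.1 hx
          rw [hMt] at hxt
          obtain ⟨s, _, rfl⟩ := Finset.mem_image.1 hxt
          refine Finset.mem_image.2 ⟨e ⟨t, s⟩, Finset.mem_univ _, ?_⟩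
          show finMin (P (e.symm (e ⟨t, s⟩)).fst (e.symm (e ⟨t, s⟩)).snd) = finMin (P t s)
          rw [e.symm_apply_apply]
      have hfinal : Finset.univ.biUnion R ∈ Schreier ((k+1) + (m+1)) := by
        apply IH (by omega) (m+1) (by omega)
        refine ⟨Fintype.card I, R, fun i => h1 _ _, fun i => h2 _ _, ?_, ?_, rfl⟩
        · have hhelp : ∀ σ τ : I, σ ≠ τ → Disjoint (P σ.1 σ.2) (P τ.1 τ.2) := by
            rintro ⟨t1, s1⟩ ⟨t2, s2⟩ hne
            by_cases ht : t1 = t2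
            · subst ht
              have hs : s1 ≠ s2 := fun h => hne (by rw [h])
              exact ordered_pairwise_disjoint (h3 t1) s1 s2 hs
            · exact (hdisj t1 t2 ht).mono (hPsubQ t1 s1) (hPsubQ t2 s2)
          intro i j hij
          exact hhelp (e.symm i) (e.symm j) (e.symm.injective.ne hij)
        · rw [hRmins]; exact hMins
      rw [hUR]
      have harith : (k+1) + (m+1) = (k+1+1) + m := by omega
      rw [← harith]
      exact hfinal


lemma schreierM_eq : ∀ n, SchreierM (n+1) = Schreier (n+1) := by
  intro n
  induction n with
  | zero => rfl
  | succ n IH =>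
    apply Set.ext
    intro U
    constructor
    · intro hU
      obtain ⟨d, B, hBQ, hBne, hdisj, hmin, rfl⟩ := hU
      have hBQ' : ∀ i, B i ∈ Schreier (n+1) := fun i => IH ▸ hBQ i
      have h := g_main (n+1) (by omega) 1 (by omega) (Finset.univ.biUnion B)
        ⟨d, B, hBQ', hBne, hdisj, hmin, rfl⟩
      have harith : (n+1) + 1 = n+2 := by omega
      rw [harith] at h
      exact h
    · intro hU
      obtain ⟨d, B, hBQ, hBne, hord, hmin, rfl⟩ := hU
      exact ⟨d, B, fun i => IH.symm ▸ hBQ i, hBne,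
        ordered_pairwise_disjoint hord, hmin, rfl⟩


/-- For every `n ≥ 1`, the modified Schreier family `S^M_n` equals
the Schreier family `S_n`; in particular `S^M_n` is hereditary (closed under subsets),
and membership in `S^M_n` and `S_n` coincide. -/
theorem modified_schreier_eq_schreier :
    ∀ n : ℕ, 1 ≤ n →
      SchreierM n = Schreier n ∧
      (∀ F ∈ SchreierM n, ∀ G ⊆ F, G ∈ SchreierM n) ∧
      (∀ F : Finset ℕ, F ∈ SchreierM n ↔ F ∈ Schreier n) := by
  intro n hn
  obtain ⟨n, rfl⟩ : ∃ n', n = n' + 1 := ⟨n - 1, by omega⟩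
  have heq := schreierM_eq n
  refine ⟨heq, ?_, fun F => by rw [heq]⟩
  intro F hF G hG
  rw [heq] at hF ⊢
  exact schreier_hereditary (n+1) F hF G hG
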